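/- arXiv:2505.14836 — 2 statements merged into one kernel-verified Lean document; each statement's English description precedes it below -/
import Mathlib

section
/- Let Λ' be a lattice with skew-symmetric form ω and let Γ ⊆ Λ' be generated by vectors g₁,…,g_m which are part of a basis of Λ' (equivalently, linearly independent with torsion-free quotient). If each gᵢ ∈ ker ω, then the left ideal of W_{Λ'} generated by {X^{gᵢ} − cᵢ} (for scalars cᵢ ∈ C(q^{1/2})^×) is a two-sided ideal, and the quotient algebra is the quantum torus W_{Λ'/Γ}. -/
/-- `qh` models `q^{1/2}`. -/
noncomputable def qh : RatFunc ℂ := RatFunc.X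

/-- Let `Γ ⊆ Λ'` be generated by `g₁, …, g_m`, linearly independent with torsion-free
quotient, each lying in the kernel of the skew form `ω`.  Then the left ideal of the
quantum torus `W_{Λ'}` generated by `{X^{gᵢ} − cᵢ}` (for nonzero scalars `cᵢ`) is a
two-sided ideal, and the quotient algebra is the quantum torus `W_{Λ'/Γ}`: there is a
surjective algebra map onto `W_{Λ'/Γ}` whose kernel is exactly that ideal. -/
theorem stmt17 (Λ : Type*) [AddCommGroup Λ] [Module.Free ℤ Λ] [Module.Finite ℤ Λ]
    (ω : Λ → Λ → ℤ)
    (hadd_l : ∀ u v w : Λ, ω (u + v) w = ω u w + ω v w)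
    (hadd_r : ∀ u v w : Λ, ω u (v + w) = ω u v + ω u w)
    (hskew : ∀ v : Λ, ω v v = 0)
    {m : ℕ} (g : Fin m → Λ) (hind : LinearIndependent ℤ g)
    (htf : ∀ (k : ℤ) (x : Λ ⧸ AddSubgroup.closure (Set.range g)),
      k ≠ 0 → k • x = 0 → x = 0)
    (hker : ∀ (i : Fin m) (v : Λ), ω (g i) v = 0 ∧ ω v (g i) = 0)
    (c : Fin m → RatFunc ℂ) (hc : ∀ i, c i ≠ 0)
    {W : Type*} [Ring W] [Algebra (RatFunc ℂ) W]
    (B : Module.Basis Λ (RatFunc ℂ) W) (hone : B 0 = 1)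
    (hmul : ∀ v w : Λ, B v * B w = (qh ^ (ω v w)) • B (v + w))
    (ω' : (Λ ⧸ AddSubgroup.closure (Set.range g)) →
          (Λ ⧸ AddSubgroup.closure (Set.range g)) → ℤ)
    (hω' : ∀ v w : Λ, ω' (QuotientAddGroup.mk v) (QuotientAddGroup.mk w) = ω v w)
    {W' : Type*} [Ring W'] [Algebra (RatFunc ℂ) W']
    (B' : Module.Basis (Λ ⧸ AddSubgroup.closure (Set.range g)) (RatFunc ℂ) W')
    (hone' : B' 0 = 1)
    (hmul' : ∀ v w, B' v * B' w = (qh ^ (ω' v w)) • B' (v + w)) :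
    (∀ x ∈ Ideal.span {x : W | ∃ i, x = B (g i) - c i • (1 : W)}, ∀ a : W,
        x * a ∈ Ideal.span {x : W | ∃ i, x = B (g i) - c i • (1 : W)}) ∧
    (∃ φ : W →ₐ[RatFunc ℂ] W', Function.Surjective φ ∧
      ∀ x : W, φ x = 0 ↔ x ∈ Ideal.span {x : W | ∃ i, x = B (g i) - c i • (1 : W)}) := by
  classical
  set I := Ideal.span {x : W | ∃ i, x = B (g i) - c i • (1 : W)} with hIdef
  -- basic facts about ω
  have hω0l : ∀ v, ω 0 v = 0 := by
    intro v; have := hadd_l 0 0 v; simp at this; omega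
  have hω0r : ∀ v, ω v 0 = 0 := by
    intro v; have := hadd_r v 0 0; simp at this; omega
  have hωnl : ∀ u v, ω (-u) v = - ω u v := by
    intro u v; have := hadd_l u (-u) v; rw [add_neg_cancel, hω0l] at this; omega
  have hωnr : ∀ u v, ω v (-u) = - ω v u := by
    intro u v; have := hadd_r v u (-u); rw [add_neg_cancel, hω0r] at this; omega
  -- elements of (AddSubgroup.closure (Set.range g)) are in the kernel of ω
  have hkerΓ : ∀ γ ∈ (AddSubgroup.closure (Set.range g)), ∀ v : Λ, ω γ v = 0 ∧ ω v γ = 0 := by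
    intro γ hγ
    refine AddSubgroup.closure_induction ?_ ?_ ?_ ?_ hγ
    · rintro x ⟨i, rfl⟩; exact hker i
    · intro v; exact ⟨hω0l v, hω0r v⟩
    · intro x y hx hy ihx ihy v
      exact ⟨by rw [hadd_l, (ihx v).1, (ihy v).1, add_zero],
             by rw [hadd_r, (ihx v).2, (ihy v).2, add_zero]⟩
    · intro x hx ihx v
      exact ⟨by rw [hωnl, (ihx v).1, neg_zero], by rw [hωnr, (ihx v).2, neg_zero]⟩
  -- closure = span ℤ
  have hMΓ : ∀ v : Λ, v ∈ (AddSubgroup.closure (Set.range g)) ↔ v ∈ Submodule.span ℤ (Set.range g) := by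
    intro v
    rw [← Submodule.span_int_eq_addSubgroupClosure]
    exact Iff.rfl
  -- the quotient
  haveI : Module.Finite ℤ (Λ ⧸ (AddSubgroup.closure (Set.range g))) :=
    Module.Finite.of_surjective (QuotientAddGroup.mk' (AddSubgroup.closure (Set.range g))).toIntLinearMap
      (QuotientAddGroup.mk'_surjective (AddSubgroup.closure (Set.range g)))
  haveI : NoZeroSMulDivisors ℤ (Λ ⧸ (AddSubgroup.closure (Set.range g))) := by
    refine ⟨fun {k x} h => ?_⟩
    by_cases hk : k = 0
    · exact Or.inl hk
    · exact Or.inr (htf k x hk h)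
  haveI : Module.Free ℤ (Λ ⧸ (AddSubgroup.closure (Set.range g))) := Module.free_of_finite_type_torsion_free'
  set π : Λ →ₗ[ℤ] (Λ ⧸ (AddSubgroup.closure (Set.range g))) := (QuotientAddGroup.mk' (AddSubgroup.closure (Set.range g))).toIntLinearMap with hπdef
  have hπmk : ∀ v : Λ, π v = QuotientAddGroup.mk v := fun _ => rfl
  have hπsurj : Function.Surjective π := QuotientAddGroup.mk'_surjective (AddSubgroup.closure (Set.range g))
  have hπ0 : ∀ γ ∈ (AddSubgroup.closure (Set.range g)), π γ = 0 := by
    intro γ hγ; rw [hπmk]; exact (QuotientAddGroup.eq_zero_iff γ).mpr hγ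
  -- splitting
  set bQ := Module.Free.chooseBasis ℤ (Λ ⧸ (AddSubgroup.closure (Set.range g))) with hbQ
  have hfex : ∀ i, ∃ v : Λ, π v = bQ i := fun i => hπsurj (bQ i)
  choose f hf using hfex
  set s : (Λ ⧸ (AddSubgroup.closure (Set.range g))) →ₗ[ℤ] Λ := bQ.constr ℤ f with hsdef
  have hπs : ∀ u, π (s u) = u := by
    have : π ∘ₗ s = LinearMap.id := by
      apply bQ.ext; intro i
      simp [hsdef, Module.Basis.constr_basis, hf i]
    intro u; exact LinearMap.congr_fun this u
  have hmem : ∀ v : Λ, v - s (π v) ∈ Submodule.span ℤ (Set.range g) := by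
    intro v
    rw [← hMΓ, ← QuotientAddGroup.eq_zero_iff, ← hπmk, map_sub, hπs, sub_self]
  -- the character χ
  set bG : Module.Basis (Fin m) ℤ (Submodule.span ℤ (Set.range g)) := Module.Basis.span hind with hbG
  set χM : Submodule.span ℤ (Set.range g) → RatFunc ℂ :=
    fun γ => ∏ i : Fin m, c i ^ (bG.repr γ i) with hχM
  set χ : Λ → RatFunc ℂ := fun v => χM ⟨v - s (π v), hmem v⟩ with hχ
  have hχM0 : χM 0 = 1 := by
    simp [hχM]
  have hχMadd : ∀ x y, χM (x + y) = χM x * χM y := by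
    intro x y
    simp only [hχM, map_add, Finsupp.add_apply]
    rw [← Finset.prod_mul_distrib]
    exact Finset.prod_congr rfl fun i _ => zpow_add₀ (hc i) _ _
  have hχMne : ∀ x, χM x ≠ 0 := by
    intro x
    simp only [hχM]
    exact Finset.prod_ne_zero_iff.mpr fun i _ => zpow_ne_zero _ (hc i)
  have hχadd : ∀ v w, χ (v + w) = χ v * χ w := by
    intro v w
    have hsub : (⟨(v + w) - s (π (v + w)), hmem _⟩ : Submodule.span ℤ (Set.range g))
        = ⟨v - s (π v), hmem v⟩ + ⟨w - s (π w), hmem w⟩ := by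
      rw [Subtype.ext_iff, Submodule.coe_add]
      simp only [map_add]
      abel
    simp only [hχ]
    rw [hsub, hχMadd]
  have hχ0 : χ 0 = 1 := by
    simp only [hχ]
    have h0 : (⟨(0 : Λ) - s (π 0), hmem 0⟩ : Submodule.span ℤ (Set.range g)) = 0 := by
      apply Subtype.ext; simp
    rw [h0, hχM0]
  have hχne : ∀ v, χ v ≠ 0 := fun v => hχMne _
  have hχneg : ∀ v, χ (-v) = (χ v)⁻¹ := by
    intro v
    have : χ v * χ (-v) = 1 := by rw [← hχadd, add_neg_cancel, hχ0]
    exact eq_inv_of_mul_eq_one_right this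
  -- χ on (AddSubgroup.closure (Set.range g)) elements
  have hχΓ : ∀ (γ : Λ) (hγ : γ ∈ (AddSubgroup.closure (Set.range g))), χ γ = χM ⟨γ, (hMΓ γ).mp hγ⟩ := by
    intro γ hγ
    simp only [hχ]
    congr 1
    rw [Subtype.ext_iff]
    show γ - s (π γ) = γ
    rw [hπ0 γ hγ, map_zero, sub_zero]
  have hχg : ∀ i, χ (g i) = c i := by
    intro i
    have hgi : g i ∈ (AddSubgroup.closure (Set.range g)) := AddSubgroup.subset_closure ⟨i, rfl⟩
    rw [hχΓ (g i) hgi]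
    have : (⟨g i, (hMΓ (g i)).mp hgi⟩ : Submodule.span ℤ (Set.range g)) = bG i := by
      apply Subtype.ext
      rw [hbG, Module.Basis.span_apply]
    rw [this]
    simp only [hχM, Module.Basis.repr_self]
    rw [Finset.prod_eq_single i]
    · rw [Finsupp.single_eq_same, zpow_one]
    · intro j _ hj
      rw [Finsupp.single_eq_of_ne hj, zpow_zero]
    · intro h; exact absurd (Finset.mem_univ i) h
  have hχs : ∀ u, χ (s u) = 1 := by
    intro u
    simp only [hχ]
    have h0 : (⟨s u - s (π (s u)), hmem (s u)⟩ : Submodule.span ℤ (Set.range g)) = 0 := by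
      apply Subtype.ext; simp [hπs u]
    rw [h0, hχM0]
  -- centrality of generators
  have hcomm : ∀ i (a : W), a * (B (g i) - c i • 1) = (B (g i) - c i • 1) * a := by
    intro i a
    have hBg : a * B (g i) = B (g i) * a := by
      have : (LinearMap.mulRight (RatFunc ℂ) (B (g i)) : W →ₗ[RatFunc ℂ] W)
          = LinearMap.mulLeft (RatFunc ℂ) (B (g i)) := by
        apply B.ext; intro w
        simp only [LinearMap.mulRight_apply, LinearMap.mulLeft_apply]
        rw [hmul, hmul, (hker i w).1, (hker i w).2, add_comm]
      exact LinearMap.congr_fun this a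
    rw [mul_sub, sub_mul, hBg, Algebra.mul_smul_comm, smul_mul_assoc, mul_one, one_mul]
  -- part 1 : the ideal is two-sided
  have part1 : ∀ x ∈ I, ∀ a : W, x * a ∈ I := by
    intro x hx a
    refine Submodule.span_induction ?_ ?_ ?_ ?_ hx
    · rintro x ⟨i, rfl⟩
      rw [← hcomm i a]
      exact Ideal.mul_mem_left _ a (Ideal.subset_span ⟨i, rfl⟩)
    · rw [zero_mul]; exact zero_mem I
    · intro x y hx hy ihx ihy; rw [add_mul]; exact add_mem ihx ihy
    · intro r x hx ihx; rw [smul_eq_mul, mul_assoc]; exact Ideal.mul_mem_left _ r ihx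
  have hIsmul : ∀ (r : RatFunc ℂ) {y : W}, y ∈ I → r • y ∈ I := by
    intro r y hy
    rw [Algebra.smul_def]; exact Ideal.mul_mem_left _ _ hy
  -- key membership for (AddSubgroup.closure (Set.range g)) elements
  have hkey : ∀ γ ∈ (AddSubgroup.closure (Set.range g)), B γ - χ γ • 1 ∈ I := by
    intro γ hγ
    refine AddSubgroup.closure_induction ?_ ?_ ?_ ?_ hγ
    · rintro x ⟨i, rfl⟩
      rw [hχg i]
      exact Ideal.subset_span ⟨i, rfl⟩
    · rw [hχ0, hone, one_smul, sub_self]; exact zero_mem I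
    · intro x y hx hy ihx ihy
      have hxy : B (x + y) = B x * B y := by
        rw [hmul, (hkerΓ x hx y).1, zpow_zero, one_smul]
      have heq : B (x + y) - χ (x + y) • 1
          = B x * (B y - χ y • 1) + χ y • (B x - χ x • 1) := by
        rw [hχadd, hxy]
        rw [mul_sub, smul_sub, Algebra.mul_smul_comm, mul_one, smul_smul, mul_comm (χ y) (χ x)]
        abel
      rw [heq]
      exact add_mem (Ideal.mul_mem_left _ _ ihy) (hIsmul _ ihx)
    · intro x hx ih
      have h1 : B x * B (-x) = 1 := by
        rw [hmul, (hkerΓ x hx (-x)).1, zpow_zero, one_smul, add_neg_cancel, hone]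
      have heq : B (-x) - χ (-x) • 1 = (-(χ x)⁻¹) • ((B x - χ x • 1) * B (-x)) := by
        rw [hχneg, sub_mul, h1, smul_mul_assoc, one_mul, smul_sub, smul_smul, neg_mul,
          inv_mul_cancel₀ (hχne x)]
        simp only [neg_smul, one_smul, sub_neg_eq_add]
        abel
      rw [heq]
      exact hIsmul _ (part1 _ ih _)
  -- key membership for general basis vectors
  have hBmem : ∀ v : Λ, B v - χ v • B (s (π v)) ∈ I := by
    intro v
    have hγ : v - s (π v) ∈ (AddSubgroup.closure (Set.range g)) := (hMΓ _).mpr (hmem v)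
    have h1 : B (v - s (π v)) * B (s (π v)) = B v := by
      rw [hmul, (hkerΓ _ hγ _).1, zpow_zero, one_smul, sub_add_cancel]
    have h2 : χ (v - s (π v)) = χ v := by
      rw [hχΓ _ hγ, hχ]
    have heq : B v - χ v • B (s (π v))
        = (B (v - s (π v)) - χ (v - s (π v)) • 1) * B (s (π v)) := by
      rw [sub_mul, h1, smul_mul_assoc, one_mul, h2]
    rw [heq]
    exact part1 _ (hkey _ hγ) _
  -- construction of the algebra map
  set φ₀ : W →ₗ[RatFunc ℂ] W' := B.constr (RatFunc ℂ) (fun v => χ v • B' (π v)) with hφ₀def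
  have hφB : ∀ v : Λ, φ₀ (B v) = χ v • B' (π v) := by
    intro v; rw [hφ₀def]; exact B.constr_basis _ _ v
  have hφone : φ₀ 1 = 1 := by
    rw [← hone, hφB, map_zero, hχ0, one_smul, hone']
  have hφmulB : ∀ v w : Λ, φ₀ (B v * B w) = φ₀ (B v) * φ₀ (B w) := by
    intro v w
    have he : ω' (π v) (π w) = ω v w := by rw [hπmk v, hπmk w]; exact hω' v w
    rw [hmul, map_smul, hφB, hφB, hφB, smul_mul_smul_comm, hmul', he, hχadd, map_add,
      smul_smul, smul_smul, mul_comm (qh ^ (ω v w)) (χ v * χ w)]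
  have hφmul : ∀ x y : W, φ₀ (x * y) = φ₀ x * φ₀ y := by
    have h2 : ∀ (v : Λ) (y : W), φ₀ (B v * y) = φ₀ (B v) * φ₀ y := by
      intro v
      have : φ₀ ∘ₗ LinearMap.mulLeft (RatFunc ℂ) (B v)
          = LinearMap.mulLeft (RatFunc ℂ) (φ₀ (B v)) ∘ₗ φ₀ := by
        apply B.ext; intro w
        simpa using hφmulB v w
      intro y; exact LinearMap.congr_fun this y
    intro x y
    have : φ₀ ∘ₗ LinearMap.mulRight (RatFunc ℂ) y
        = LinearMap.mulRight (RatFunc ℂ) (φ₀ y) ∘ₗ φ₀ := by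
      apply B.ext; intro v
      simpa using h2 v y
    exact LinearMap.congr_fun this x
  set φ : W →ₐ[RatFunc ℂ] W' := AlgHom.ofLinearMap φ₀ hφone hφmul with hφdef
  have hφapp : ∀ x : W, φ x = φ₀ x := fun _ => rfl
  -- surjectivity
  have hφs : ∀ u, φ (B (s u)) = B' u := by
    intro u
    rw [hφapp, hφB, hχs, one_smul, hπs]
  have hsurj : Function.Surjective φ := by
    intro y
    have hy : y ∈ Submodule.span (RatFunc ℂ) (Set.range B') := by
      rw [Module.Basis.span_eq]; trivial
    refine Submodule.span_induction ?_ ?_ ?_ ?_ hy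
    · rintro _ ⟨u, rfl⟩; exact ⟨B (s u), hφs u⟩
    · exact ⟨0, map_zero _⟩
    · rintro x y - - ⟨a, rfl⟩ ⟨b, rfl⟩; exact ⟨a + b, map_add _ _ _⟩
    · rintro r x - ⟨a, rfl⟩; exact ⟨r • a, map_smul φ r a⟩
  -- the section ψ
  set ψ : W' →ₗ[RatFunc ℂ] W := B'.constr (RatFunc ℂ) (fun u => B (s u)) with hψdef
  have hψB : ∀ u, ψ (B' u) = B (s u) := by
    intro u; rw [hψdef]; exact B'.constr_basis _ _ u
  have hker' : ∀ x : W, x - ψ (φ x) ∈ I := by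
    intro x
    have hx : x ∈ Submodule.span (RatFunc ℂ) (Set.range B) := by
      rw [Module.Basis.span_eq]; trivial
    refine Submodule.span_induction ?_ ?_ ?_ ?_ hx
    · rintro _ ⟨v, rfl⟩
      rw [hφapp, hφB, map_smul, hψB]
      exact hBmem v
    · rw [map_zero, map_zero, sub_zero]; exact zero_mem I
    · intro a b ha hb iha ihb
      have : (a + b) - ψ (φ (a + b)) = (a - ψ (φ a)) + (b - ψ (φ b)) := by
        rw [map_add, map_add]; abel
      rw [this]; exact add_mem iha ihb
    · intro r a ha iha
      have : (r • a) - ψ (φ (r • a)) = r • (a - ψ (φ a)) := by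
        rw [map_smul, map_smul, smul_sub]
      rw [this]; exact hIsmul r iha
  -- ideal is contained in the kernel
  have hIker : ∀ x ∈ I, φ x = 0 := by
    intro x hx
    refine Submodule.span_induction ?_ ?_ ?_ ?_ hx
    · rintro _ ⟨i, rfl⟩
      have hgi : g i ∈ (AddSubgroup.closure (Set.range g)) := AddSubgroup.subset_closure ⟨i, rfl⟩
      rw [map_sub, hφapp, hφB, hπ0 _ hgi, hχg, hone', map_smul, map_one, sub_self]
    · exact map_zero _
    · intro a b ha hb iha ihb; rw [map_add, iha, ihb, add_zero]
    · intro r a ha iha; rw [smul_eq_mul, map_mul, iha, mul_zero]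
  refine ⟨part1, φ, hsurj, fun x => ⟨fun hφx => ?_, fun hx => hIker x hx⟩⟩
  have := hker' x
  rwa [hφx, map_zero, sub_zero] at this
end

section
/- In the quantum torus over C(q^{1/2}) with invertible generators M, L (LM = qML), the element A_q = q^{22}M^8L^3 − q^{17}M^8L − q^{16}M^6L^3 + (q^{37/2} − q^{29/2})M^6L^2 + q^{15/2}M^4L^4 + q^{15}M^6L − (q^{12}+q^{10})M^4L^3 + (q^{17}+q^{15})M^4L − q^4M^2L^3 − q^{35/2}M^4 + (−q^{25/2}+q^{17/2})M^2L^2 + q^{15}M^2L + L^3 − q^{15}L, when specialized at q^{1/2} = −1 (so q = 1), becomes divisible in C[M^{±1}, L^{±1}] by the classical figure-eight A-polynomial factor M^4 + L(−1 + M^2 + 2M^4 + M^6 − M^8) + L^2M^4. -/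
/-- `M` in the commutative Laurent ring `ℂ[M^{±1}, L^{±1}] = ℂ[ℤ × ℤ]`. -/
noncomputable def M19 : AddMonoidAlgebra ℂ (ℤ × ℤ) := AddMonoidAlgebra.single (1, 0) 1

/-- `L` in the commutative Laurent ring `ℂ[M^{±1}, L^{±1}] = ℂ[ℤ × ℤ]`. -/
noncomputable def L19 : AddMonoidAlgebra ℂ (ℤ × ℤ) := AddMonoidAlgebra.single (0, 1) 1

/-- Specializing the quantum element `A_q` at `q^{1/2} = −1` (each `q^{k/2}` becomes
`(−1)^k`), the result is divisible in `ℂ[M^{±1}, L^{±1}]` by the classical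
figure-eight A-polynomial factor `M^4 + L(−1 + M² + 2M⁴ + M⁶ − M⁸) + L²M⁴`. -/
theorem stmt19 :
    ∃ Cq : AddMonoidAlgebra ℂ (ℤ × ℤ),
      ((-1 : ℂ) ^ 44) • (M19 ^ 8 * L19 ^ 3) - ((-1 : ℂ) ^ 34) • (M19 ^ 8 * L19)
        - ((-1 : ℂ) ^ 32) • (M19 ^ 6 * L19 ^ 3)
        + (((-1 : ℂ) ^ 37) - ((-1 : ℂ) ^ 29)) • (M19 ^ 6 * L19 ^ 2)
        + ((-1 : ℂ) ^ 15) • (M19 ^ 4 * L19 ^ 4)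
        + ((-1 : ℂ) ^ 30) • (M19 ^ 6 * L19)
        - (((-1 : ℂ) ^ 24) + ((-1 : ℂ) ^ 20)) • (M19 ^ 4 * L19 ^ 3)
        + (((-1 : ℂ) ^ 34) + ((-1 : ℂ) ^ 30)) • (M19 ^ 4 * L19)
        - ((-1 : ℂ) ^ 8) • (M19 ^ 2 * L19 ^ 3)
        - ((-1 : ℂ) ^ 35) • (M19 ^ 4)
        + ((-((-1 : ℂ) ^ 25)) + ((-1 : ℂ) ^ 17)) • (M19 ^ 2 * L19 ^ 2)
        + ((-1 : ℂ) ^ 30) • (M19 ^ 2 * L19)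
        + L19 ^ 3 - ((-1 : ℂ) ^ 30) • L19
      = (M19 ^ 4 + L19 * (-1 + M19 ^ 2 + 2 * M19 ^ 4 + M19 ^ 6 - M19 ^ 8)
          + L19 ^ 2 * M19 ^ 4) * Cq := by
  use 1 - L19 ^ 2
  norm_num
  simp only [two_smul]
  ring
end
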